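/- If N < 4, then there exist x > 0 and u ≥ −x such that (N−4)u² + 3x(N−3)u + 3x²(N−2) < 0. -/

import Mathlib

theorem grushin_quadratic_fails (N : ℝ) (hN : N < 4) :
    ∃ x u : ℝ, 0 < x ∧ -x ≤ u ∧
      (N - 4) * u ^ 2 + 3 * x * (N - 3) * u + 3 * x ^ 2 * (N - 2) < 0 := by
  have hc : 0 < 4 - N := by linarith
  set u : ℝ := (3 * |N - 3| + 3 * |N - 2| + 1) / (4 - N) + 1 with hu
  have hA : 0 < 3 * |N - 3| + 3 * |N - 2| + 1 := by positivity
  have hu1 : 1 ≤ u := by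
    have h : 0 ≤ (3 * |N - 3| + 3 * |N - 2| + 1) / (4 - N) := by positivity
    rw [hu]; linarith
  have hkey : (4 - N) * u = 3 * |N - 3| + 3 * |N - 2| + 1 + (4 - N) := by
    rw [hu, mul_add, mul_div_assoc', mul_div_cancel_left₀ _ hc.ne']; ring
  refine ⟨1, u, one_pos, by linarith, ?_⟩
  have h1 : N - 3 ≤ |N - 3| := le_abs_self _
  have h2 : N - 2 ≤ |N - 2| := le_abs_self _
  nlinarith [mul_pos hc (by linarith : (0:ℝ) < u), sq_nonneg u,
    mul_le_mul_of_nonneg_left h1 (by linarith : (0:ℝ) ≤ 3 * u),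
    abs_nonneg (N - 3), abs_nonneg (N - 2)]
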